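/- arXiv:2311.16403 — 7 statements merged into one kernel-verified Lean document; each statement's English description precedes it below -/
import Mathlib

section
/- Let p(C) be an n-dimensional DGCA with coefficient matrix C=(c_{ij}), and let J_C = {k ∈ [n] : c_{ij} = 0 for all i,j ≥ 1 with i+j = k}. Then {p_k : k ∈ J_C} is a minimal generating set of p(C) as an algebra; in particular 1 ∈ J_C, so J_C is nonempty. -/
/-- Bilinear multiplication determined by the coefficient matrix `c`:
`p_i p_j = c i j • p_{i+j}`. -/
def dmul {K : Type*} [Field K] (c : ℕ → ℕ → K) (x y : ℕ → K) : ℕ → K :=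
  fun m => ∑ i ∈ Finset.range (m + 1), c i (m - i) * x i * y (m - i)

/-- The carrier of the `n`-dimensional DGCA: functions supported on degrees `1,...,n`. -/
def carrierW (K : Type*) [Field K] (n : ℕ) : Set (ℕ → K) :=
  {x | ∀ m, m = 0 ∨ n < m → x m = 0}

/-- A subset closed under the (non-unital) algebra operations. -/
def IsSubalg {K : Type*} [Field K] (c : ℕ → ℕ → K) (T : Set (ℕ → K)) : Prop :=
  (0 : ℕ → K) ∈ T ∧ (∀ x ∈ T, ∀ y ∈ T, x + y ∈ T) ∧
    (∀ (a : K), ∀ x ∈ T, a • x ∈ T) ∧ (∀ x ∈ T, ∀ y ∈ T, dmul c x y ∈ T)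

/-- The subalgebra of the DGCA `p(C)` generated by a subset `S`. -/
def gen {K : Type*} [Field K] (n : ℕ) (c : ℕ → ℕ → K) (S : Set (ℕ → K)) : Set (ℕ → K) :=
  ⋂₀ {T | S ⊆ T ∧ T ⊆ carrierW K n ∧ IsSubalg c T}

section Aux

variable {K : Type*} [Field K] (n : ℕ) (c : ℕ → ℕ → K)

lemma subset_gen (S : Set (ℕ → K)) : S ⊆ gen n c S := by
  intro x hx T hT
  exact hT.1 hx

lemma gen_subset {S T : Set (ℕ → K)} (h1 : S ⊆ T) (h2 : T ⊆ carrierW K n)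
    (h3 : IsSubalg c T) : gen n c S ⊆ T :=
  Set.sInter_subset_of_mem ⟨h1, h2, h3⟩

lemma gen_isSubalg (S : Set (ℕ → K)) : IsSubalg c (gen n c S) := by
  refine ⟨?_, ?_, ?_, ?_⟩
  · intro T hT; exact hT.2.2.1
  · intro x hx y hy T hT; exact hT.2.2.2.1 x (hx T hT) y (hy T hT)
  · intro a x hx T hT; exact hT.2.2.2.2.1 a x (hx T hT)
  · intro x hx y hy T hT; exact hT.2.2.2.2.2 x (hx T hT) y (hy T hT)

lemma carrierW_isSubalg (hzero : ∀ i j, i = 0 ∨ j = 0 ∨ n < i + j → c i j = 0) :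
    IsSubalg c (carrierW K n) := by
  refine ⟨?_, ?_, ?_, ?_⟩
  · intro m _; rfl
  · intro x hx y hy m hm
    have := hx m hm; have := hy m hm
    simp_all [Pi.add_apply]
  · intro a x hx m hm
    have := hx m hm
    simp_all [Pi.smul_apply]
  · intro x hx y hy m hm
    show (∑ i ∈ Finset.range (m + 1), c i (m - i) * x i * y (m - i)) = 0
    apply Finset.sum_eq_zero
    intro i hi
    rw [Finset.mem_range] at hi
    have hc : c i (m - i) = 0 := by
      apply hzero
      rcases hm with hm | hm
      · left; omega
      · right; right; omega
    rw [hc]; ring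

lemma dmul_single (i j : ℕ) :
    dmul c (Pi.single i (1 : K)) (Pi.single j (1 : K))
      = c i j • (Pi.single (i + j) (1 : K) : ℕ → K) := by
  funext m
  show (∑ a ∈ Finset.range (m + 1),
      c a (m - a) * (Pi.single i (1:K) : ℕ → K) a * (Pi.single j (1:K) : ℕ → K) (m - a))
      = (c i j • (Pi.single (i + j) (1:K) : ℕ → K)) m
  by_cases hm : m = i + j
  · subst hm
    rw [Finset.sum_eq_single i]
    · rw [Pi.smul_apply, Pi.single_eq_same, Pi.single_eq_same,
        show i + j - i = j by omega, Pi.single_eq_same]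
      ring_nf
    · intro b _ hbi
      rw [Pi.single_eq_of_ne hbi]; ring
    · intro h; exact absurd (Finset.mem_range.mpr (by omega)) h
  · rw [Pi.smul_apply, Pi.single_eq_of_ne hm, smul_zero]
    apply Finset.sum_eq_zero
    intro a ha
    rw [Finset.mem_range] at ha
    by_cases hai : a = i
    · subst hai
      rw [Pi.single_eq_of_ne (show m - a ≠ j by omega)]; ring
    · rw [Pi.single_eq_of_ne hai]; ring

end Aux

theorem stmt_2 {K : Type*} [Field K] (n : ℕ) (hn : 1 ≤ n) (c : ℕ → ℕ → K)
    (hsym : ∀ i j, c i j = c j i)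
    (hassoc : ∀ i j l, 1 ≤ i → 1 ≤ j → 1 ≤ l →
      c j l * c i (j + l) = c i j * c (i + j) l)
    (hzero : ∀ i j, i = 0 ∨ j = 0 ∨ n < i + j → c i j = 0) :
    let J : Set ℕ := {m | 1 ≤ m ∧ m ≤ n ∧ ∀ i j, 1 ≤ i → 1 ≤ j → i + j = m → c i j = 0}
    let P : Set (ℕ → K) := (fun m => Pi.single m (1 : K)) '' J
    (1 : ℕ) ∈ J ∧
      gen n c P = carrierW K n ∧
      ∀ S ⊆ P, gen n c S = carrierW K n → S = P := by
  intro J P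
  have hJ1 : (1 : ℕ) ∈ J := ⟨le_refl 1, hn, fun i j hi hj hij => absurd hij (by omega)⟩
  have hPcar : P ⊆ carrierW K n := by
    rintro _ ⟨m, ⟨hm1, hm2, _⟩, rfl⟩
    intro k hk
    show (Pi.single m (1 : K) : ℕ → K) k = 0
    have hkm : k ≠ m := by omega
    exact Pi.single_eq_of_ne hkm _
  -- every basic vector p_k (1 ≤ k ≤ n) lies in gen P
  have hsingle : ∀ k, 1 ≤ k → k ≤ n → Pi.single k (1 : K) ∈ gen n c P := by
    intro k
    induction k using Nat.strong_induction_on with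
    | _ k ih =>
      intro hk1 hkn
      by_cases hkJ : k ∈ J
      · exact subset_gen n c P ⟨k, hkJ, rfl⟩
      · simp only [J, Set.mem_setOf_eq] at hkJ
        push_neg at hkJ
        obtain ⟨i, j, hi, hj, hij, hc⟩ := hkJ hk1 hkn
        have h1 := ih i (by omega) hi (by omega)
        have h2 := ih j (by omega) hj (by omega)
        have h3 := (gen_isSubalg n c P).2.2.2 _ h1 _ h2
        rw [dmul_single] at h3
        have h4 := (gen_isSubalg n c P).2.2.1 (c i j)⁻¹ _ h3
        rw [smul_smul, inv_mul_cancel₀ hc, one_smul, hij] at h4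
        exact h4
  have hsum : ∀ (s : Finset ℕ) (f : ℕ → (ℕ → K)), (∀ k ∈ s, f k ∈ gen n c P) →
      (∑ k ∈ s, f k) ∈ gen n c P := by
    intro s f
    induction s using Finset.induction with
    | empty => intro _; simpa using (gen_isSubalg n c P).1
    | insert _ _ hx ih =>
      intro h
      rw [Finset.sum_insert hx]
      exact (gen_isSubalg n c P).2.1 _ (h _ (Finset.mem_insert_self _ _))
        _ (ih fun k hk => h k (Finset.mem_insert_of_mem hk))
  have hcar : carrierW K n ⊆ gen n c P := by
    intro x hx
    have hxs : x = ∑ k ∈ Finset.Icc 1 n, x k • (Pi.single k (1 : K) : ℕ → K) := by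
      funext m
      rw [Finset.sum_apply]
      by_cases hm : m ∈ Finset.Icc 1 n
      · rw [Finset.sum_eq_single m]
        · rw [Pi.smul_apply, Pi.single_eq_same, smul_eq_mul, mul_one]
        · intro b _ hbm
          rw [Pi.smul_apply, Pi.single_eq_of_ne (Ne.symm hbm), smul_zero]
        · intro h; exact absurd hm h
      · rw [Finset.mem_Icc, not_and_or, not_le, not_le] at hm
        rw [Finset.sum_eq_zero, hx m (by omega)]
        intro b hb
        rw [Finset.mem_Icc] at hb
        rw [Pi.smul_apply, Pi.single_eq_of_ne (by omega), smul_zero]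
    rw [hxs]
    apply hsum
    intro k hk
    rw [Finset.mem_Icc] at hk
    exact (gen_isSubalg n c P).2.2.1 (x k) _ (hsingle k hk.1 hk.2)
  have hgenP : gen n c P = carrierW K n :=
    Set.Subset.antisymm (gen_subset n c hPcar (subset_refl _)
      (carrierW_isSubalg n c hzero)) hcar
  refine ⟨hJ1, hgenP, ?_⟩
  intro S hSP hgenS
  apply Set.Subset.antisymm hSP
  rintro _ ⟨m, hmJ, rfl⟩
  by_contra hpS
  obtain ⟨hm1, hm2, hmc⟩ := hmJ
  set T : Set (ℕ → K) := {x | x ∈ carrierW K n ∧ x m = 0} with hT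
  have hSsubT : S ⊆ T := by
    intro s hs
    obtain ⟨m', hm', heq⟩ := hSP hs
    have hne : m ≠ m' := by
      rintro rfl
      exact hpS (heq ▸ hs)
    refine ⟨hPcar (hSP hs), ?_⟩
    rw [← heq]
    show (Pi.single m' (1 : K) : ℕ → K) m = 0
    exact Pi.single_eq_of_ne hne _
  have hcsub := carrierW_isSubalg n c hzero
  have hTsub : IsSubalg c T := by
    refine ⟨⟨hcsub.1, rfl⟩, ?_, ?_, ?_⟩
    · intro x hx y hy
      refine ⟨hcsub.2.1 x hx.1 y hy.1, ?_⟩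
      rw [Pi.add_apply, hx.2, hy.2, add_zero]
    · intro a x hx
      refine ⟨hcsub.2.2.1 a x hx.1, ?_⟩
      rw [Pi.smul_apply, hx.2, smul_zero]
    · intro x hx y hy
      refine ⟨hcsub.2.2.2 x hx.1 y hy.1, ?_⟩
      show (∑ i ∈ Finset.range (m + 1), c i (m - i) * x i * y (m - i)) = 0
      apply Finset.sum_eq_zero
      intro i hi
      rw [Finset.mem_range] at hi
      have hc : c i (m - i) = 0 := by
        rcases Nat.eq_zero_or_pos i with rfl | hi1
        · exact hzero 0 (m - 0) (Or.inl rfl)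
        rcases Nat.eq_zero_or_pos (m - i) with h0 | hmi0
        · rw [h0]; exact hzero i 0 (Or.inr (Or.inl rfl))
        · exact hmc i (m - i) hi1 hmi0 (by omega)
      rw [hc]; ring
  have hgenT : gen n c S ⊆ T := gen_subset n c hSsubT (fun x hx => hx.1) hTsub
  have hmem : Pi.single m (1 : K) ∈ gen n c S := by
    rw [hgenS]
    exact hPcar ⟨m, ⟨hm1, hm2, hmc⟩, rfl⟩
  have := (hgenT hmem).2
  rw [Pi.single_eq_same] at this
  exact one_ne_zero this
end

section
/- For a DGCA p(C) of dimension n, the group of graded algebra automorphisms of p(C) equals { (b_1,...,b_n) ∈ (k*)^n : b_{i+j} = b_i b_j whenever c_{ij} ≠ 0 }, where the tuple (b_i) acts by p_i ↦ b_i p_i. In particular, if two symmetric matrices C and C' in M_n have the same distribution of nonzero entries, then Aut(p(C)) = Aut(p(C')) as subgroups of (k*)^n. -/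
theorem stmt_3 {K : Type*} [Field K] (n : ℕ) (hn : 1 ≤ n) (c c' : ℕ → ℕ → K)
    (hsym : ∀ i j, c i j = c j i)
    (hassoc : ∀ i j l, 1 ≤ i → 1 ≤ j → 1 ≤ l →
      c j l * c i (j + l) = c i j * c (i + j) l)
    (hzero : ∀ i j, i = 0 ∨ j = 0 ∨ n < i + j → c i j = 0)
    (hsym' : ∀ i j, c' i j = c' j i)
    (hassoc' : ∀ i j l, 1 ≤ i → 1 ≤ j → 1 ≤ l →
      c' j l * c' i (j + l) = c' i j * c' (i + j) l)
    (hzero' : ∀ i j, i = 0 ∨ j = 0 ∨ n < i + j → c' i j = 0) :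
    -- a tuple of nonzero scalars acts (by `p_i ↦ b_i p_i`) as a graded algebra
    -- automorphism of `p(C)` iff `b_{i+j} = b_i b_j` whenever `c_{ij} ≠ 0`
    ((∀ b : ℕ → K, (∀ i, 1 ≤ i → i ≤ n → b i ≠ 0) →
      ((∀ x y : ℕ → K, ∀ m, b m * dmul c x y m =
          dmul c (fun i => b i * x i) (fun i => b i * y i) m) ↔
        ∀ i j, 1 ≤ i → 1 ≤ j → i + j ≤ n → c i j ≠ 0 → b (i + j) = b i * b j)) ∧
    -- and if `C ∼ C'` (same distribution of nonzero entries) then the two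
    -- automorphism groups coincide (as subsets of `(k*)^n`)
    ((∀ i j, c i j = 0 ↔ c' i j = 0) →
      ∀ b : ℕ → K,
        ((∀ i j, 1 ≤ i → 1 ≤ j → i + j ≤ n → c i j ≠ 0 → b (i + j) = b i * b j) ↔
          (∀ i j, 1 ≤ i → 1 ≤ j → i + j ≤ n → c' i j ≠ 0 → b (i + j) = b i * b j)))) := by
  constructor
  · intro b hb
    constructor
    · intro h i j hi hj hij hc
      have := h (fun t => if t = i then 1 else 0) (fun t => if t = j then 1 else 0) (i + j)
      have e1 : dmul c (fun t => if t = i then (1:K) else 0)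
          (fun t => if t = j then 1 else 0) (i + j) = c i j := by
        unfold dmul
        rw [Finset.sum_eq_single i]
        · simp
        · intro t _ ht
          simp [ht]
        · intro h'
          exact absurd (Finset.mem_range.mpr (by omega)) h'
      have e2 : dmul c (fun t => b t * (if t = i then (1:K) else 0))
          (fun t => b t * (if t = j then 1 else 0)) (i + j) = c i j * (b i * b j) := by
        unfold dmul
        rw [Finset.sum_eq_single i]
        · simp; ring
        · intro t _ ht
          simp [ht]
        · intro h'
          exact absurd (Finset.mem_range.mpr (by omega)) h'
      rw [e1, e2] at this
      rw [mul_comm (b (i+j))] at this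
      exact mul_left_cancel₀ hc this
    · intro h x y m
      unfold dmul
      rw [Finset.mul_sum]
      apply Finset.sum_congr rfl
      intro t ht
      rw [Finset.mem_range] at ht
      by_cases hc : c t (m - t) = 0
      · simp [hc]
      · have ht1 : 1 ≤ t := by
          by_contra h'
          exact hc (hzero t (m - t) (Or.inl (by omega)))
        have ht2 : 1 ≤ m - t := by
          by_contra h'
          exact hc (hzero t (m - t) (Or.inr (Or.inl (by omega))))
        have hm : t + (m - t) ≤ n := by
          by_contra h'
          exact hc (hzero t (m - t) (Or.inr (Or.inr (by omega))))
        have := h t (m - t) ht1 ht2 hm hc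
        have hmeq : t + (m - t) = m := by omega
        rw [hmeq] at this
        rw [this]; ring
  · intro heq b
    constructor
    · intro h i j hi hj hij hc
      exact h i j hi hj hij (fun h0 => hc ((heq i j).mp h0))
    · intro h i j hi hj hij hc
      exact h i j hi hj hij (fun h0 => hc ((heq i j).mpr h0))
end

section
/- Let k be algebraically closed, C ∈ M_{n-1}, and θ a graded 2-cocycle of p(C) with values in V = k·p_n. For every b' ∈ k* there exists a graded algebra automorphism σ of p(C) such that θ∘(σ×σ) = b'·θ; consequently p(C)_{θ∘(σ×σ)} ≅ p(C)_θ. Concretely, for the automorphism φ_b: p_i ↦ b^i p_i one has θ∘(φ_b×φ_b) = b^n θ. -/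
/-- The bilinear form (coefficient of `p_n`) associated with a 2-cocycle tuple `t`. -/
def Bform {K : Type*} [Field K] (n : ℕ) (t : ℕ → K) (x y : ℕ → K) : K :=
  ∑ i ∈ Finset.Ico 1 n, t i * x i * y (n - i)

/-- Coefficient matrix of the central extension `p(C)_θ`. -/
def Dmat {K : Type*} [Field K] (n : ℕ) (c : ℕ → ℕ → K) (t : ℕ → K) : ℕ → ℕ → K :=
  fun i j => if i + j = n ∧ 1 ≤ i ∧ 1 ≤ j then t i else c i j

/-- Diagonal linear equivalence of `ℕ → K` given by a family of nonzero scalars. -/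
def diagEquiv {K : Type*} [Field K] (d : ℕ → K) (hd : ∀ i, d i ≠ 0) :
    (ℕ → K) ≃ₗ[K] (ℕ → K) where
  toFun x := fun i => d i * x i
  invFun x := fun i => (d i)⁻¹ * x i
  map_add' x y := by funext i; simp [Pi.add_apply]; ring
  map_smul' a x := by funext i; simp [Pi.smul_apply, smul_eq_mul]; ring
  left_inv x := by funext i; exact inv_mul_cancel_left₀ (hd i) _
  right_inv x := by funext i; exact mul_inv_cancel_left₀ (hd i) _

lemma diagEquiv_apply {K : Type*} [Field K] (d : ℕ → K) (hd : ∀ i, d i ≠ 0) (x : ℕ → K) :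
    diagEquiv d hd x = fun i => d i * x i := rfl

lemma diagEquiv_single {K : Type*} [Field K] (d : ℕ → K) (hd : ∀ i, d i ≠ 0) (i : ℕ) :
    diagEquiv d hd (Pi.single i 1) = Pi.single i (d i) := by
  funext j
  by_cases h : j = i
  · subst h; simp [diagEquiv]
  · simp [diagEquiv, Pi.single_apply, h]

lemma bform_scale {K : Type*} [Field K] (n : ℕ) (t : ℕ → K) (b : K) (x y : ℕ → K) :
    Bform n t (fun i => b ^ i * x i) (fun i => b ^ i * y i) = b ^ n * Bform n t x y := by
  unfold Bform
  rw [Finset.mul_sum]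
  refine Finset.sum_congr rfl fun i hi => ?_
  obtain ⟨h1, h2⟩ := Finset.mem_Ico.mp hi
  have hb : b ^ i * b ^ (n - i) = b ^ n := by
    rw [← pow_add, Nat.add_sub_cancel' (le_of_lt h2)]
  rw [← hb]; ring

theorem stmt_8 {K : Type*} [Field K] [IsAlgClosed K] (n : ℕ) (hn : 2 ≤ n)
    (c : ℕ → ℕ → K)
    (hsym : ∀ i j, c i j = c j i)
    (hassoc : ∀ i j l, 1 ≤ i → 1 ≤ j → 1 ≤ l →
      c j l * c i (j + l) = c i j * c (i + j) l)
    (hzero : ∀ i j, i = 0 ∨ j = 0 ∨ n - 1 < i + j → c i j = 0)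
    (t : ℕ → K)
    (htsym : ∀ i, 1 ≤ i → i ≤ n - 1 → t i = t (n - i))
    (htinv : ∀ i j l, 1 ≤ i → 1 ≤ j → 1 ≤ l → i + j + l = n →
      t (i + j) * c i j = t (j + l) * c j l) :
    -- concretely, θ∘(φ_b × φ_b) = b^n θ for the automorphism φ_b : p_i ↦ b^i p_i
    (∀ b : K, b ≠ 0 → ∀ x y : ℕ → K,
        Bform n t (fun i => b ^ i * x i) (fun i => b ^ i * y i) =
          b ^ n * Bform n t x y) ∧
    -- for every b' ∈ k* there is a graded algebra automorphism σ of p(C) with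
    -- θ∘(σ×σ) = b'·θ, and consequently p(C)_{θ∘(σ×σ)} = p(C)_{b'·θ} ≅ p(C)_θ
    (∀ b' : K, b' ≠ 0 →
      (∃ σ : (ℕ → K) ≃ₗ[K] (ℕ → K),
          (∀ i : ℕ, ∃ d : K, σ (Pi.single i 1) = Pi.single i d) ∧
          (∀ x y, σ (dmul c x y) = dmul c (σ x) (σ y)) ∧
          (∀ x y, Bform n t (σ x) (σ y) = b' * Bform n t x y)) ∧
      (∃ φ : (ℕ → K) ≃ₗ[K] (ℕ → K),
          (∀ i : ℕ, ∃ d : K, φ (Pi.single i 1) = Pi.single i d) ∧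
          ∀ x y, φ (dmul (Dmat n c (fun i => b' * t i)) x y) =
            dmul (Dmat n c t) (φ x) (φ y))) := by
  constructor
  · intro b _ x y
    exact bform_scale n t b x y
  · intro b' hb'
    constructor
    · -- σ = φ_b where b^n = b'
      obtain ⟨b, hbn⟩ := IsAlgClosed.exists_pow_nat_eq b' (n := n) (by omega)
      have hb : b ≠ 0 := by
        intro h; apply hb'; rw [← hbn, h, zero_pow (by omega)]
      have hd : ∀ i : ℕ, (b ^ i : K) ≠ 0 := fun i => pow_ne_zero i hb
      refine ⟨diagEquiv (fun i => b ^ i) hd, fun i => ⟨b ^ i, diagEquiv_single _ hd i⟩, ?_, ?_⟩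
      · intro x y
        funext m
        rw [diagEquiv_apply]
        show b ^ m * dmul c x y m = dmul c (diagEquiv _ hd x) (diagEquiv _ hd y) m
        unfold dmul
        rw [Finset.mul_sum]
        refine Finset.sum_congr rfl fun i hi => ?_
        have him : i ≤ m := Nat.lt_succ_iff.mp (Finset.mem_range.mp hi)
        have hbm : b ^ i * b ^ (m - i) = b ^ m := by
          rw [← pow_add, Nat.add_sub_cancel' him]
        rw [diagEquiv_apply, diagEquiv_apply, ← hbm]; ring
      · intro x y
        rw [diagEquiv_apply, diagEquiv_apply, bform_scale, hbn]
    · -- φ scales coordinate n by b'⁻¹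
      set d : ℕ → K := fun i => if i = n then b'⁻¹ else 1 with hdle
      have hd : ∀ i, d i ≠ 0 := by
        intro i; simp only [hdle]
        split <;> simp [inv_ne_zero hb']
      refine ⟨diagEquiv d hd, fun i => ⟨d i, diagEquiv_single _ hd i⟩, ?_⟩
      intro x y
      funext m
      rw [diagEquiv_apply]
      show d m * dmul (Dmat n c (fun i => b' * t i)) x y m
        = dmul (Dmat n c t) (diagEquiv d hd x) (diagEquiv d hd y) m
      unfold dmul
      rw [Finset.mul_sum]
      refine Finset.sum_congr rfl fun i hi => ?_
      have him : i ≤ m := Nat.lt_succ_iff.mp (Finset.mem_range.mp hi)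
      rw [diagEquiv_apply, diagEquiv_apply]
      simp only
      have hsum : i + (m - i) = m := Nat.add_sub_cancel' him
      have hDmat : ∀ (s : ℕ → K) (a b : ℕ), Dmat n c s a b
          = if a + b = n ∧ 1 ≤ a ∧ 1 ≤ b then s a else c a b := fun _ _ _ => rfl
      have hdval : ∀ j, d j = if j = n then b'⁻¹ else 1 := fun _ => rfl
      by_cases hcond : i + (m - i) = n ∧ 1 ≤ i ∧ 1 ≤ m - i
      · have hm : m = n := by omega
        have hin : i ≠ n := by omega
        have hni : m - i ≠ n := by omega
        have hdm : d m = b'⁻¹ := by rw [hdval, if_pos hm]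
        have hdi : d i = 1 := by rw [hdval, if_neg hin]
        have hdni : d (m - i) = 1 := by rw [hdval, if_neg hni]
        rw [hDmat, hDmat, if_pos hcond, if_pos hcond, hdm, hdi, hdni]
        field_simp
      · rw [hDmat, hDmat, if_neg hcond, if_neg hcond]
        by_cases hc0 : c i (m - i) = 0
        · rw [hc0]; ring
        · have h1 : i ≠ 0 := fun h => hc0 (hzero _ _ (Or.inl h))
          have h2 : m - i ≠ 0 := fun h => hc0 (hzero _ _ (Or.inr (Or.inl h)))
          have h3 : ¬ (n - 1 < i + (m - i)) := fun h => hc0 (hzero _ _ (Or.inr (Or.inr h)))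
          have hdm : d m = 1 := by rw [hdval, if_neg (by omega)]
          have hdi : d i = 1 := by rw [hdval, if_neg (by omega)]
          have hdni : d (m - i) = 1 := by rw [hdval, if_neg (by omega)]
          rw [hdm, hdi, hdni]; ring
end

section
/- Let C ∈ M_{n-1} and θ a graded 2-cocycle of p(C). If a connected component of Gr(C) is contractible, i.e., contains a vertex p = i+j for some i,j ≥ 1 with c_{ij} ≠ 0 but c_{j,n-i-j} = 0, then θ vanishes on every vertex of that connected component. -/
/-- Adjacency condition of the graph `Gr(C)`. -/
def adjRel {K : Type*} [Field K] (n : ℕ) (c : ℕ → ℕ → K) (p q : ℕ) : Prop :=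
  p + q = n ∨ ∃ i j l, 1 ≤ i ∧ 1 ≤ j ∧ 1 ≤ l ∧ i + j + l = n ∧
    p = i + j ∧ q = j + l ∧ c i j * c j l ≠ 0

/-- The undirected simple graph `Gr(C)` on the vertices `1,...,n-1`. -/
def grC {K : Type*} [Field K] (n : ℕ) (c : ℕ → ℕ → K) : SimpleGraph ℕ where
  Adj p q := p ≠ q ∧ (adjRel n c p q ∨ adjRel n c q p)
  symm := ⟨by intro p q h; exact ⟨h.1.symm, h.2.symm⟩⟩
  loopless := ⟨by intro p h; exact h.1 rfl⟩

theorem stmt_12 {K : Type*} [Field K] (n : ℕ) (hn : 2 ≤ n) (c : ℕ → ℕ → K)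
    (hsym : ∀ i j, c i j = c j i)
    (hassoc : ∀ i j l, 1 ≤ i → 1 ≤ j → 1 ≤ l →
      c j l * c i (j + l) = c i j * c (i + j) l)
    (hzero : ∀ i j, i = 0 ∨ j = 0 ∨ n - 1 < i + j → c i j = 0)
    -- a graded 2-cocycle, given as a tuple (t_i)
    (t : ℕ → K)
    (htsym : ∀ i, 1 ≤ i → i ≤ n - 1 → t i = t (n - i))
    (htinv : ∀ i j l, 1 ≤ i → 1 ≤ j → 1 ≤ l → i + j + l = n →
      t (i + j) * c i j = t (j + l) * c j l)
    -- a contractibility witness: the vertex i+j with c_{ij} ≠ 0 and c_{j, n-i-j} = 0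
    (i j : ℕ) (hi : 1 ≤ i) (hj : 1 ≤ j)
    (hcij : c i j ≠ 0) (hvan : c j (n - i - j) = 0) :
    -- θ vanishes on every vertex of the connected component containing i+j
    ∀ q, (grC n c).Reachable (i + j) q → 1 ≤ q → q ≤ n - 1 → t q = 0 := by
  -- if c a b ≠ 0 then a, b ≥ 1 and a + b ≤ n - 1
  have hrange : ∀ a b, c a b ≠ 0 → 1 ≤ a ∧ 1 ≤ b ∧ a + b ≤ n - 1 := by
    intro a b hab
    by_contra h
    exact hab (hzero a b (by omega))
  set P : ℕ → Prop := fun q => t q = 0 ∧ 1 ≤ q ∧ q ≤ n - 1 with hP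
  -- base case
  have hbase : P (i + j) := by
    have hr := hrange i j hcij
    have hl : 1 ≤ n - i - j := by omega
    have hsum : i + j + (n - i - j) = n := by omega
    have := htinv i j (n - i - j) hi hj hl hsum
    rw [hvan, mul_zero] at this
    exact ⟨by
      have := mul_eq_zero.mp this
      tauto, by omega, hr.2.2⟩
  -- edge step
  have hstep : ∀ p q, (grC n c).Adj p q → P p → P q := by
    intro p q hadj hp
    obtain ⟨htp, hp1, hp2⟩ := hp
    obtain ⟨hne, hor | hor⟩ := hadj
    · rcases hor with hsumn | ⟨a, b, l, ha, hb, hl, hsum, hpe, hqe, hc⟩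
      · refine ⟨?_, by omega, by omega⟩
        have : t q = t (n - q) := htsym q (by omega) (by omega)
        rw [this]
        have : n - q = p := by omega
        rw [this, htp]
      · have hc1 : c a b ≠ 0 := fun h => hc (by rw [h, zero_mul])
        have hc2 : c b l ≠ 0 := fun h => hc (by rw [h, mul_zero])
        have hr2 := hrange b l hc2
        have := htinv a b l ha hb hl hsum
        rw [← hpe, ← hqe, htp, zero_mul] at this
        have : t q = 0 := by
          rcases mul_eq_zero.mp this.symm with h | h
          · exact h
          · exact absurd h hc2
        exact ⟨this, by omega, by omega⟩
    · rcases hor with hsumn | ⟨a, b, l, ha, hb, hl, hsum, hqe, hpe, hc⟩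
      · refine ⟨?_, by omega, by omega⟩
        have : t q = t (n - q) := htsym q (by omega) (by omega)
        rw [this]
        have : n - q = p := by omega
        rw [this, htp]
      · have hc1 : c a b ≠ 0 := fun h => hc (by rw [h, zero_mul])
        have hc2 : c b l ≠ 0 := fun h => hc (by rw [h, mul_zero])
        have hr1 := hrange a b hc1
        have := htinv a b l ha hb hl hsum
        rw [← hpe, ← hqe, htp, zero_mul] at this
        have : t q = 0 := by
          rcases mul_eq_zero.mp this with h | h
          · exact h
          · exact absurd h hc1
        exact ⟨this, by omega, by omega⟩
  -- walk induction
  have hwalk : ∀ (p q : ℕ) (_ : (grC n c).Walk p q), P p → P q := by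
    intro p q w
    induction w with
    | nil => exact id
    | cons h w ih => intro hp; exact ih (hstep _ _ h hp)
  intro q hreach _ _
  obtain ⟨w⟩ := hreach
  exact (hwalk _ _ w hbase).1
end

section
/- Let k be an algebraically closed field and C ∈ M_{n-1}. If the graph Gr(C) has exactly one nonvanishing connected component (a generic component on which some 2-cocycle is nonzero, and every nonzero 2-cocycle is supported only there), then any two nonzero graded 2-cocycles θ, γ of p(C) are proportional, and hence all nontrivial central extensions p(C)_θ with θ ≠ 0 are pairwise isomorphic as graded algebras. -/
/-- A graded 2-cocycle of `p(C)` with values in `k·p_n`, as a tuple in `k^{n-1}`. -/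
def Cocy {K : Type*} [Field K] (n : ℕ) (c : ℕ → ℕ → K) (t : ℕ → K) : Prop :=
  (∀ i, i = 0 ∨ n ≤ i → t i = 0) ∧
  (∀ i, 1 ≤ i → i ≤ n - 1 → t i = t (n - i)) ∧
  (∀ i j l, 1 ≤ i → 1 ≤ j → 1 ≤ l → i + j + l = n →
    t (i + j) * c i j = t (j + l) * c j l)

/-- A connected component is nonvanishing if some 2-cocycle takes a nonzero value
on it. -/
def Nonvanishing {K : Type*} [Field K] (n : ℕ) (c : ℕ → ℕ → K)
    (Kc : (grC n c).ConnectedComponent) : Prop :=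
  ∃ t : ℕ → K, Cocy n c t ∧
    ∃ p, 1 ≤ p ∧ p ≤ n - 1 ∧ (grC n c).connectedComponentMk p = Kc ∧ t p ≠ 0

section Aux

variable {K : Type*} [Field K] {n : ℕ} {c : ℕ → ℕ → K}

/-- For a cocycle, `t a = t b` whenever `a + b = n`. -/
lemma nsum_eq {t : ℕ → K} (ht : Cocy n c t) {a b : ℕ} (h : a + b = n) :
    t a = t b := by
  rcases Nat.eq_zero_or_pos a with ha | ha
  · subst ha
    have hb : b = n := by omega
    rw [ht.1 0 (Or.inl rfl), hb, ht.1 n (Or.inr le_rfl)]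
  · rcases le_or_gt n a with h2 | h2
    · have hA : a = n := by omega
      have hB : b = 0 := by omega
      rw [hA, hB, ht.1 n (Or.inr le_rfl), ht.1 0 (Or.inl rfl)]
    · have e := ht.2.1 a ha (by omega)
      rw [e]
      congr 1
      omega

/-- The relation `s x = lam * t x` propagates along edges of `Gr(C)`. -/
lemma adj_prop {t s : ℕ → K} (ht : Cocy n c t) (hs : Cocy n c s) (lam : K)
    {a b : ℕ} (h : adjRel n c a b ∨ adjRel n c b a) (hab : s a = lam * t a) :
    s b = lam * t b := by
  rcases h with (hn | ⟨i, j, l, hi, hj, hl, hijl, hp, hq, hc⟩) |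
      (hn | ⟨i, j, l, hi, hj, hl, hijl, hp, hq, hc⟩)
  · rw [← nsum_eq hs hn, hab, nsum_eq ht hn]
  · -- a = i + j, b = j + l
    subst hp; subst hq
    have hcjl : c j l ≠ 0 := fun h0 => hc (by rw [h0, mul_zero])
    have e1 := ht.2.2 i j l hi hj hl hijl
    have e2 := hs.2.2 i j l hi hj hl hijl
    have : s (j + l) * c j l = (lam * t (j + l)) * c j l := by
      rw [← e2, hab, mul_assoc, e1]; ring
    exact mul_right_cancel₀ hcjl this
  · rw [nsum_eq hs (by omega : b + a = n), hab, ← nsum_eq ht (by omega : b + a = n)]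
  · -- b = i + j, a = j + l
    subst hp; subst hq
    have hcij : c i j ≠ 0 := fun h0 => hc (by rw [h0, zero_mul])
    have e1 := ht.2.2 i j l hi hj hl hijl
    have e2 := hs.2.2 i j l hi hj hl hijl
    have : s (i + j) * c i j = (lam * t (i + j)) * c i j := by
      rw [e2, hab, mul_assoc, ← e1]; ring
    exact mul_right_cancel₀ hcij this

/-- The relation `s x = lam * t x` propagates along walks of `Gr(C)`. -/
lemma walk_prop {t s : ℕ → K} (ht : Cocy n c t) (hs : Cocy n c s) (lam : K)
    {a b : ℕ} (w : (grC n c).Walk a b) (hab : s a = lam * t a) :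
    s b = lam * t b := by
  induction w with
  | nil => exact hab
  | cons h p ih => exact ih (adj_prop ht hs lam h.2 hab)

/-- A vertex where a cocycle is nonzero yields a nonvanishing component. -/
lemma nonvanishing_of_ne {t : ℕ → K} (ht : Cocy n c t) {a : ℕ} (hta : t a ≠ 0) :
    Nonvanishing n c ((grC n c).connectedComponentMk a) := by
  have hrange : ¬(a = 0 ∨ n ≤ a) := fun h => hta (ht.1 a h)
  exact ⟨t, ht, a, by omega, by omega, rfl, hta⟩

end Aux
section Aux2

variable {K : Type*} [Field K]

/-- The diagonal scaling map as a linear equivalence. -/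
noncomputable def scaleEquiv (d : ℕ → K) (hd : ∀ i, d i ≠ 0) :
    (ℕ → K) ≃ₗ[K] (ℕ → K) where
  toFun := fun x i => d i * x i
  invFun := fun x i => (d i)⁻¹ * x i
  map_add' := by intro x y; funext i; simp [mul_add]
  map_smul' := by intro m x; funext i; simp [Pi.smul_apply, smul_eq_mul]; ring
  left_inv := by intro x; funext i; exact inv_mul_cancel_left₀ (hd i) (x i)
  right_inv := by intro x; funext i; exact mul_inv_cancel_left₀ (hd i) (x i)

lemma key_scale {n : ℕ} {c : ℕ → ℕ → K} (hzero : ∀ i j, i = 0 ∨ j = 0 ∨ n - 1 < i + j → c i j = 0)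
    (t : ℕ → K) (lam : K) (i j : ℕ) :
    (if i + j = n then lam else 1) * Dmat n c t i j =
      Dmat n c (fun k => lam * t k) i j * ((if i = n then lam else 1) * (if j = n then lam else 1)) := by
  by_cases h : i + j = n ∧ 1 ≤ i ∧ 1 ≤ j
  · have hi : i ≠ n := by omega
    have hj : j ≠ n := by omega
    simp only [Dmat, if_pos h, if_pos h.1, if_neg hi, if_neg hj]
    ring
  · simp only [Dmat, if_neg h]
    by_cases hc : c i j = 0
    · simp [hc]
    · have hb : ¬(i = 0 ∨ j = 0 ∨ n - 1 < i + j) := fun hh => hc (hzero i j hh)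
      have h1 : i + j ≠ n := by omega
      have h2 : i ≠ n := by omega
      have h3 : j ≠ n := by omega
      simp [h1, h2, h3]

end Aux2
theorem stmt_16 {K : Type*} [Field K] [IsAlgClosed K] (n : ℕ) (hn : 2 ≤ n)
    (c : ℕ → ℕ → K)
    (hsym : ∀ i j, c i j = c j i)
    (hassoc : ∀ i j l, 1 ≤ i → 1 ≤ j → 1 ≤ l →
      c j l * c i (j + l) = c i j * c (i + j) l)
    (hzero : ∀ i j, i = 0 ∨ j = 0 ∨ n - 1 < i + j → c i j = 0)
    -- Gr(C) has exactly one nonvanishing connected component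
    (huniq : ∃! Kc : (grC n c).ConnectedComponent, Nonvanishing n c Kc) :
    ∀ t s : ℕ → K, Cocy n c t → Cocy n c s →
      (∃ i, t i ≠ 0) → (∃ i, s i ≠ 0) →
      -- any two nonzero 2-cocycles are proportional
      (∃ lam : K, lam ≠ 0 ∧ s = fun i => lam * t i) ∧
      -- and the corresponding central extensions are isomorphic as graded algebras
      (∃ φ : (ℕ → K) ≃ₗ[K] (ℕ → K),
        (∀ i : ℕ, ∃ d : K, φ (Pi.single i 1) = Pi.single i d) ∧
        ∀ x y, φ (dmul (Dmat n c t) x y) = dmul (Dmat n c s) (φ x) (φ y)) := by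
  intro t s ht hs ⟨a, hta⟩ ⟨b, hsb⟩
  obtain ⟨Kc, _, hKuniq⟩ := huniq
  have ea : (grC n c).connectedComponentMk a = Kc :=
    hKuniq _ (nonvanishing_of_ne ht hta)
  have eb : (grC n c).connectedComponentMk b = Kc :=
    hKuniq _ (nonvanishing_of_ne hs hsb)
  -- t is nonzero at b
  have hreach_ba : (grC n c).Reachable b a :=
    SimpleGraph.ConnectedComponent.exact (eb.trans ea.symm)
  have htb : t b ≠ 0 := by
    intro htb0
    obtain ⟨w⟩ := hreach_ba
    exact hta (by simpa using walk_prop ht ht (0 : K) w (by simp [htb0]))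
  set lam : K := s b * (t b)⁻¹ with hlam
  have hlamne : lam ≠ 0 := mul_ne_zero hsb (inv_ne_zero htb)
  have hbase : s b = lam * t b := by rw [hlam, mul_assoc, inv_mul_cancel₀ htb, mul_one]
  -- proportionality at every index
  have hprop : ∀ i, s i = lam * t i := by
    intro i
    by_cases h0 : t i = 0 ∧ s i = 0
    · rw [h0.2, h0.1, mul_zero]
    · have hKi : (grC n c).connectedComponentMk i = Kc := by
        rcases not_and_or.mp h0 with h | h
        · exact hKuniq _ (nonvanishing_of_ne ht h)
        · exact hKuniq _ (nonvanishing_of_ne hs h)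
      have : (grC n c).Reachable b i :=
        SimpleGraph.ConnectedComponent.exact (eb.trans hKi.symm)
      obtain ⟨w⟩ := this
      exact walk_prop ht hs lam w hbase
  have hseq : s = fun i => lam * t i := funext hprop
  refine ⟨⟨lam, hlamne, hseq⟩, ?_⟩
  -- the isomorphism
  set d : ℕ → K := fun i => if i = n then lam else 1 with hd
  have hdne : ∀ i, d i ≠ 0 := by
    intro i
    by_cases h : i = n <;> simp [hd, h, hlamne]
  refine ⟨scaleEquiv d hdne, ?_, ?_⟩
  · intro i
    refine ⟨d i, ?_⟩
    funext j
    by_cases h : j = i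
    · subst h; simp [scaleEquiv, Pi.single_apply]
    · simp [scaleEquiv, Pi.single_apply, h]
  · intro x y
    funext m
    show d m * dmul (Dmat n c t) x y m =
      dmul (Dmat n c s) (fun i => d i * x i) (fun i => d i * y i) m
    unfold dmul
    rw [Finset.mul_sum]
    refine Finset.sum_congr rfl ?_
    intro i hi
    show d m * (Dmat n c t i (m - i) * x i * y (m - i)) =
      Dmat n c s i (m - i) * (d i * x i) * (d (m - i) * y (m - i))
    have him : i ≤ m := by
      simpa using Nat.lt_succ_iff.mp (Finset.mem_range.mp hi)
    have hij : i + (m - i) = m := by omega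
    have hkey := key_scale hzero t lam i (m - i)
    rw [hij] at hkey
    rw [hseq]
    have hdm : d m = if m = n then lam else 1 := rfl
    have hdi : d i = if i = n then lam else 1 := rfl
    have hdmi : d (m - i) = if m - i = n then lam else 1 := rfl
    rw [hdm, hdi, hdmi]
    calc (if m = n then lam else 1) * (Dmat n c t i (m - i) * x i * y (m - i))
        = ((if m = n then lam else 1) * Dmat n c t i (m - i)) * x i * y (m - i) := by ring
      _ = (Dmat n c (fun k => lam * t k) i (m - i) *
            ((if i = n then lam else 1) * (if m - i = n then lam else 1))) * x i * y (m - i) := by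
            rw [hkey]
      _ = Dmat n c (fun k => lam * t k) i (m - i) * ((if i = n then lam else 1) * x i) *
            ((if m - i = n then lam else 1) * y (m - i)) := by ring
end

section
/- Let C = (c_{ij}) be the 8×8 symmetric matrix over a field k whose only nonzero entries are c_{24}=c_{42}, c_{33}, c_{25}=c_{52}, c_{34}=c_{43}, c_{35}=c_{53}, c_{44}, and let C' be any 8×8 matrix with the same nonzero-entry positions, all equal to 1. If the DGCAs p(C) and p(C') are isomorphic as graded algebras, then c_{25} c_{33} c_{44} = c_{24} c_{34} c_{35}. -/
/-- The positions of the (possibly) nonzero entries of the 8×8 matrix of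
Example 2.9: (2,4),(4,2),(3,3),(2,5),(5,2),(3,4),(4,3),(3,5),(5,3),(4,4). -/
def pos8 (i j : ℕ) : Prop :=
  (i = 2 ∧ j = 4) ∨ (i = 4 ∧ j = 2) ∨ (i = 3 ∧ j = 3) ∨ (i = 2 ∧ j = 5) ∨
  (i = 5 ∧ j = 2) ∨ (i = 3 ∧ j = 4) ∨ (i = 4 ∧ j = 3) ∨ (i = 3 ∧ j = 5) ∨
  (i = 5 ∧ j = 3) ∨ (i = 4 ∧ j = 4)

theorem stmt_17 {K : Type*} [Field K] (c c' : ℕ → ℕ → K)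
    (hsym : ∀ i j, c i j = c j i)
    -- C has nonzero entries exactly at the listed positions
    (hczero : ∀ i j, ¬ pos8 i j → c i j = 0)
    (hcne : ∀ i j, pos8 i j → c i j ≠ 0)
    -- C' has entry 1 at those positions and 0 elsewhere
    (hc'one : ∀ i j, pos8 i j → c' i j = 1)
    (hc'zero : ∀ i j, ¬ pos8 i j → c' i j = 0)
    -- the DGCAs p(C) and p(C') are isomorphic as graded algebras, i.e. there are
    -- nonzero scalars b_1,...,b_8 with b_{i+j} c_{ij} = b_i b_j c'_{ij}
    (hiso : ∃ b : ℕ → K, (∀ i, 1 ≤ i → i ≤ 8 → b i ≠ 0) ∧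
      ∀ i j, 1 ≤ i → 1 ≤ j → i + j ≤ 8 →
        b (i + j) * c i j = b i * b j * c' i j) :
    c 2 5 * c 3 3 * c 4 4 = c 2 4 * c 3 4 * c 3 5 := by
  obtain ⟨b, hb, h⟩ := hiso
  have h24 := h 2 4 (by norm_num) (by norm_num) (by norm_num)
  have h33 := h 3 3 (by norm_num) (by norm_num) (by norm_num)
  have h25 := h 2 5 (by norm_num) (by norm_num) (by norm_num)
  have h34 := h 3 4 (by norm_num) (by norm_num) (by norm_num)
  have h35 := h 3 5 (by norm_num) (by norm_num) (by norm_num)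
  have h44 := h 4 4 (by norm_num) (by norm_num) (by norm_num)
  rw [hc'one 2 4 (Or.inl ⟨rfl, rfl⟩), mul_one] at h24
  rw [hc'one 3 3 (Or.inr (Or.inr (Or.inl ⟨rfl, rfl⟩))), mul_one] at h33
  rw [hc'one 2 5 (Or.inr (Or.inr (Or.inr (Or.inl ⟨rfl, rfl⟩)))), mul_one] at h25
  rw [hc'one 3 4 (Or.inr (Or.inr (Or.inr (Or.inr (Or.inr (Or.inl ⟨rfl, rfl⟩)))))), mul_one] at h34
  rw [hc'one 3 5 (Or.inr (Or.inr (Or.inr (Or.inr (Or.inr (Or.inr (Or.inr (Or.inl ⟨rfl, rfl⟩)))))))), mul_one] at h35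
  rw [hc'one 4 4 (Or.inr (Or.inr (Or.inr (Or.inr (Or.inr (Or.inr (Or.inr (Or.inr (Or.inr ⟨rfl, rfl⟩))))))))), mul_one] at h44
  norm_num at h24 h33 h25 h34 h35 h44
  have hne : b 6 * b 7 * b 8 ≠ 0 :=
    mul_ne_zero (mul_ne_zero (hb 6 (by norm_num) (by norm_num)) (hb 7 (by norm_num) (by norm_num))) (hb 8 (by norm_num) (by norm_num))
  apply mul_left_cancel₀ hne
  calc b 6 * b 7 * b 8 * (c 2 5 * c 3 3 * c 4 4)
      = (b 7 * c 2 5) * (b 6 * c 3 3) * (b 8 * c 4 4) := by ring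
    _ = (b 2 * b 5) * (b 3 * b 3) * (b 4 * b 4) := by rw [h25, h33, h44]
    _ = (b 2 * b 4) * (b 3 * b 4) * (b 3 * b 5) := by ring
    _ = (b 6 * c 2 4) * (b 7 * c 3 4) * (b 8 * c 3 5) := by rw [h24, h34, h35]
    _ = b 6 * b 7 * b 8 * (c 2 4 * c 3 4 * c 3 5) := by ring
end

section
/- Let C ∈ M_{n-1} and let D be the n×n matrix extending C by a 2-cocycle θ: d_{ij} = c_{ij} if i+j < n, d_{ij} = θ_i if i+j = n, and d_{ij} = 0 otherwise. Then D ∈ M_n, i.e., D is symmetric and satisfies d_{jk} d_{i,j+k} = d_{ij} d_{i+j,k} for all i,j,k ≥ 1. -/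
theorem stmt_19 {K : Type*} [Field K] (n : ℕ) (hn : 2 ≤ n) (c : ℕ → ℕ → K)
    (hsym : ∀ i j, c i j = c j i)
    (hassoc : ∀ i j l, 1 ≤ i → 1 ≤ j → 1 ≤ l →
      c j l * c i (j + l) = c i j * c (i + j) l)
    (hzero : ∀ i j, i = 0 ∨ j = 0 ∨ n - 1 < i + j → c i j = 0)
    -- a graded 2-cocycle, given as a tuple (t_i)
    (t : ℕ → K)
    (htsym : ∀ i, 1 ≤ i → i ≤ n - 1 → t i = t (n - i))
    (htinv : ∀ i j l, 1 ≤ i → 1 ≤ j → 1 ≤ l → i + j + l = n →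
      t (i + j) * c i j = t (j + l) * c j l) :
    -- then D ∈ M_n: D is symmetric, satisfies the associativity relations, and
    -- vanishes outside the admissible range
    (∀ i j, Dmat n c t i j = Dmat n c t j i) ∧
    (∀ i j l, 1 ≤ i → 1 ≤ j → 1 ≤ l →
      Dmat n c t j l * Dmat n c t i (j + l) =
        Dmat n c t i j * Dmat n c t (i + j) l) ∧
    (∀ i j, i = 0 ∨ j = 0 ∨ n < i + j → Dmat n c t i j = 0) := by
  refine ⟨?_, ?_, ?_⟩
  · intro i j
    unfold Dmat
    by_cases h : i + j = n ∧ 1 ≤ i ∧ 1 ≤ j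
    · obtain ⟨h1, h2, h3⟩ := h
      rw [if_pos ⟨h1, h2, h3⟩, if_pos ⟨by omega, h3, h2⟩, htsym i h2 (by omega)]
      congr 1; omega
    · rw [if_neg h, if_neg (fun hc => h ⟨by omega, hc.2.2, hc.2.1⟩)]
      exact hsym i j
  · intro i j l hi hj hl
    unfold Dmat
    rcases lt_trichotomy (i + j + l) n with hs | hs | hs
    · rw [if_neg (by omega), if_neg (by omega), if_neg (by omega), if_neg (by omega)]
      exact hassoc i j l hi hj hl
    · rw [if_neg (by omega), if_pos ⟨by omega, hi, by omega⟩,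
        if_neg (by omega), if_pos ⟨by omega, by omega, hl⟩]
      have h1 := htinv i j l hi hj hl hs
      have h2 : t i = t (j + l) := by
        rw [htsym i hi (by omega)]; congr 1; omega
      rw [h2]; linear_combination -h1
    · rw [if_neg (show ¬(i + (j + l) = n ∧ 1 ≤ i ∧ 1 ≤ j + l) from by omega),
        if_neg (show ¬(i + j + l = n ∧ 1 ≤ i + j ∧ 1 ≤ l) from by omega),
        hzero i (j + l) (by omega), hzero (i + j) l (by omega), mul_zero, mul_zero]
  · intro i j h
    unfold Dmat
    rw [if_neg (by omega)]
    exact hzero i j (by omega)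
end
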